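/- With the lower-bound construction below, for every i ∈ [n], every choice of a ∈ ∏_{v=1}^k T_{2i−1}^v and b ∈ ∏_{v=1}^k T_{2i}^v, and every j ∈ [n] with j ≠ i: d_TV(P_{i,a,b}, H_j) = k(3+β)/d. Consequently, d_TV(P_{i,a,b}, H_j) / d_TV(P_{i,a,b}, H_i) = (3+β)/(1+β) ≥ 3 − 2β. (Distance-ratio computation in the proof of Theorem 3.6, showing approximation factor nearly 3 for all non-optimal hypotheses.) -/

import Mathlib

/-- The block `T_u^v` (0-indexed: `u ∈ {0,…,2n−1}`, `v ∈ {0,…,k−1}`): the `ℓ`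
consecutive domain elements `{u·kℓ + v·ℓ, …, u·kℓ + (v+1)·ℓ − 1}` of `{0,…,d−1}`. -/
def Tblk (k ℓ u v : ℕ) : Finset ℕ :=
  Finset.Ico (u * (k * ℓ) + v * ℓ) (u * (k * ℓ) + (v + 1) * ℓ)

/-- The hypothesis `H_i` (0-indexed `i ∈ {0,…,n−1}`) of the lower-bound construction:
mass `(1+β)/d` on `T_{2i}`, mass `(1−β)/d` on `T_{2i+1}`, and `1/d` elsewhere, where
`d = 2nkℓ` and `β = 1/(ℓ−1)`. -/
noncomputable def Hhyp (n k ℓ i x : ℕ) : ℝ :=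
  if 2 * i * (k * ℓ) ≤ x ∧ x < (2 * i + 1) * (k * ℓ) then
    (1 + 1 / ((ℓ : ℝ) - 1)) / (2 * n * k * ℓ)
  else if (2 * i + 1) * (k * ℓ) ≤ x ∧ x < (2 * i + 2) * (k * ℓ) then
    (1 - 1 / ((ℓ : ℝ) - 1)) / (2 * n * k * ℓ)
  else 1 / (2 * (n : ℝ) * k * ℓ)

/-- The true distribution `P_{i,a,b}` of the lower-bound construction, where for each
`v < k`, `a v ∈ T_{2i}^v` is the zero-mass element and `b v ∈ T_{2i+1}^v` is the
element of mass `2/d`; elsewhere `P_{i,a,b}` agrees with `H_i`. -/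
noncomputable def Pdist (n k ℓ i : ℕ) (a b : Fin k → ℕ) (x : ℕ) : ℝ :=
  if ∃ v : Fin k, a v = x then 0
  else if ∃ v : Fin k, b v = x then 2 / (2 * (n : ℝ) * k * ℓ)
  else Hhyp n k ℓ i x

lemma Hhyp_eq (n k ℓ t x : ℕ) :
    Hhyp n k ℓ t x =
      if 2 * t * (k * ℓ) ≤ x ∧ x < 2 * t * (k * ℓ) + k * ℓ then
        (1 + 1 / ((ℓ : ℝ) - 1)) / (2 * (n : ℝ) * k * ℓ)
      else if 2 * t * (k * ℓ) + k * ℓ ≤ x ∧ x < 2 * t * (k * ℓ) + 2 * (k * ℓ) then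
        (1 - 1 / ((ℓ : ℝ) - 1)) / (2 * (n : ℝ) * k * ℓ)
      else 1 / (2 * (n : ℝ) * k * ℓ) := by
  have e1 : (2 * t + 1) * (k * ℓ) = 2 * t * (k * ℓ) + k * ℓ := by ring
  have e2 : (2 * t + 2) * (k * ℓ) = 2 * t * (k * ℓ) + 2 * (k * ℓ) := by ring
  rw [Hhyp, e1, e2]

lemma Hhyp_out (n k ℓ t x : ℕ)
    (h : x < 2 * t * (k * ℓ) ∨ 2 * t * (k * ℓ) + 2 * (k * ℓ) ≤ x) :
    Hhyp n k ℓ t x = 1 / (2 * (n : ℝ) * k * ℓ) := by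
  rw [Hhyp_eq]
  generalize k * ℓ = m at h ⊢
  generalize 2 * t * m = c at h ⊢
  split_ifs with h1 h2 <;> first | rfl | (exfalso; omega)

lemma Hhyp_in1 (n k ℓ t x : ℕ)
    (h1 : 2 * t * (k * ℓ) ≤ x) (h2 : x < 2 * t * (k * ℓ) + k * ℓ) :
    Hhyp n k ℓ t x = (1 + 1 / ((ℓ : ℝ) - 1)) / (2 * (n : ℝ) * k * ℓ) := by
  rw [Hhyp_eq, if_pos ⟨h1, h2⟩]

lemma Hhyp_in2 (n k ℓ t x : ℕ)
    (h1 : 2 * t * (k * ℓ) + k * ℓ ≤ x) (h2 : x < 2 * t * (k * ℓ) + 2 * (k * ℓ)) :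
    Hhyp n k ℓ t x = (1 - 1 / ((ℓ : ℝ) - 1)) / (2 * (n : ℝ) * k * ℓ) := by
  rw [Hhyp_eq]
  generalize k * ℓ = m at h1 h2 ⊢
  generalize 2 * t * m = c at h1 h2 ⊢
  split_ifs with g1 g2 <;> first | rfl | (exfalso; omega)

lemma Hdiff (n k ℓ i j : ℕ) (hℓ : 2 ≤ ℓ) (hij : j ≠ i) (x : ℕ) :
    |Hhyp n k ℓ i x - Hhyp n k ℓ j x|
      = (1 / ((ℓ : ℝ) - 1)) / (2 * (n : ℝ) * k * ℓ) *
        (if (2 * i * (k * ℓ) ≤ x ∧ x < 2 * i * (k * ℓ) + 2 * (k * ℓ)) ∨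
            (2 * j * (k * ℓ) ≤ x ∧ x < 2 * j * (k * ℓ) + 2 * (k * ℓ)) then 1 else 0) := by
  have hL : (1 : ℝ) < (ℓ : ℝ) := by exact_mod_cast (by omega : 1 < ℓ)
  have hβ0 : (0 : ℝ) ≤ 1 / ((ℓ : ℝ) - 1) := div_nonneg zero_le_one (by linarith)
  have hD0 : (0 : ℝ) ≤ 2 * (n : ℝ) * k * ℓ :=
    mul_nonneg (mul_nonneg (mul_nonneg (by norm_num) (Nat.cast_nonneg n)) (Nat.cast_nonneg k))
      (Nat.cast_nonneg ℓ)
  have hsep : 2 * i * (k * ℓ) + 2 * (k * ℓ) ≤ 2 * j * (k * ℓ) ∨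
      2 * j * (k * ℓ) + 2 * (k * ℓ) ≤ 2 * i * (k * ℓ) := by
    rcases Nat.lt_or_ge i j with h | h
    · left
      calc 2 * i * (k * ℓ) + 2 * (k * ℓ) = (2 * i + 2) * (k * ℓ) := by ring
        _ ≤ (2 * j) * (k * ℓ) := mul_le_mul_left (by omega) _
    · right
      have h' : j < i := lt_of_le_of_ne h hij
      calc 2 * j * (k * ℓ) + 2 * (k * ℓ) = (2 * j + 2) * (k * ℓ) := by ring
        _ ≤ (2 * i) * (k * ℓ) := mul_le_mul_left (by omega) _
  rw [Hhyp_eq n k ℓ i, Hhyp_eq n k ℓ j]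
  generalize k * ℓ = m at hsep ⊢
  generalize 2 * i * m = ci at hsep ⊢
  generalize 2 * j * m = cj at hsep ⊢
  split_ifs <;>
    first
      | (exfalso; omega)
      | (rw [mul_one, div_sub_div_same, abs_div, abs_of_nonneg hD0]
         congr 1
         rw [abs_eq hβ0]
         first | (left; ring1) | (right; ring1))
      | simp

/-- **Distance-ratio computation in the proof of Theorem 3.6.**
For every `i < n`, admissible extreme elements `a, b`, and `j ≠ i` with `j < n`:
`d_TV(P_{i,a,b}, H_j) = k(3+β)/d`; consequently, using
`d_TV(P_{i,a,b}, H_i) = k(1+β)/d`, the ratio of distances is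
`(3+β)/(1+β) ≥ 3 − 2β`, where `β = 1/(ℓ−1)` and `d = 2nkℓ`. -/
theorem lower_bound_distance_to_other_hypotheses
    (n k ℓ : ℕ) (hn : 1 ≤ n) (hk : 1 ≤ k) (hℓ : 2 ≤ ℓ)
    (i j : ℕ) (hi : i < n) (hj : j < n) (hij : j ≠ i) (a b : Fin k → ℕ)
    (ha : ∀ v : Fin k, a v ∈ Tblk k ℓ (2 * i) v)
    (hb : ∀ v : Fin k, b v ∈ Tblk k ℓ (2 * i + 1) v) :
    ((1 / 2) * ∑ x ∈ Finset.range (2 * n * k * ℓ), |Pdist n k ℓ i a b x - Hhyp n k ℓ j x|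
      = (k : ℝ) * (3 + 1 / ((ℓ : ℝ) - 1)) / (2 * n * k * ℓ)) ∧
    (((1 / 2) * ∑ x ∈ Finset.range (2 * n * k * ℓ),
          |Pdist n k ℓ i a b x - Hhyp n k ℓ j x|) /
        ((1 / 2) * ∑ x ∈ Finset.range (2 * n * k * ℓ),
          |Pdist n k ℓ i a b x - Hhyp n k ℓ i x|)
      = (3 + 1 / ((ℓ : ℝ) - 1)) / (1 + 1 / ((ℓ : ℝ) - 1))) ∧
    (3 - 2 * (1 / ((ℓ : ℝ) - 1))
      ≤ (3 + 1 / ((ℓ : ℝ) - 1)) / (1 + 1 / ((ℓ : ℝ) - 1))) := by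
  have hL : (1 : ℝ) < (ℓ : ℝ) := by exact_mod_cast (by omega : 1 < ℓ)
  have hβ0 : (0 : ℝ) ≤ 1 / ((ℓ : ℝ) - 1) := div_nonneg zero_le_one (by linarith)
  have hn0 : (0 : ℝ) < n := by exact_mod_cast hn
  have hk0 : (0 : ℝ) < k := by exact_mod_cast hk
  have hℓ0 : (0 : ℝ) < ℓ := by linarith
  have hD0 : (0 : ℝ) < 2 * (n : ℝ) * k * ℓ :=
    mul_pos (mul_pos (mul_pos two_pos hn0) hk0) hℓ0
  have hLne : ((ℓ : ℝ) - 1) ≠ 0 := by linarith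
  have hnne : (n : ℝ) ≠ 0 := ne_of_gt hn0
  have hkne : (k : ℝ) ≠ 0 := ne_of_gt hk0
  have hℓne : (ℓ : ℝ) ≠ 0 := ne_of_gt hℓ0
  -- bounds on a and b
  have haB : ∀ v : Fin k, 2 * i * (k * ℓ) ≤ a v ∧ a v < 2 * i * (k * ℓ) + k * ℓ := by
    intro v
    have h := ha v
    simp only [Tblk, Finset.mem_Ico] at h
    have h1 : ((v : ℕ) + 1) * ℓ ≤ k * ℓ := mul_le_mul_left (by have := v.isLt; omega) ℓ
    exact ⟨le_trans (Nat.le_add_right _ _) h.1, lt_of_lt_of_le h.2 (Nat.add_le_add_left h1 _)⟩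
  have hbB : ∀ v : Fin k, 2 * i * (k * ℓ) + k * ℓ ≤ b v ∧ b v < 2 * i * (k * ℓ) + 2 * (k * ℓ) := by
    intro v
    have h := hb v
    simp only [Tblk, Finset.mem_Ico] at h
    have e : (2 * i + 1) * (k * ℓ) = 2 * i * (k * ℓ) + k * ℓ := by ring
    rw [e] at h
    have h1 : ((v : ℕ) + 1) * ℓ ≤ k * ℓ := mul_le_mul_left (by have := v.isLt; omega) ℓ
    refine ⟨le_trans (Nat.le_add_right _ _) h.1, ?_⟩
    calc b v < 2 * i * (k * ℓ) + k * ℓ + ((v : ℕ) + 1) * ℓ := h.2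
      _ ≤ 2 * i * (k * ℓ) + k * ℓ + k * ℓ := Nat.add_le_add_left h1 _
      _ = 2 * i * (k * ℓ) + 2 * (k * ℓ) := by ring
  -- separation of the i-blocks and j-blocks
  have hsep : 2 * i * (k * ℓ) + 2 * (k * ℓ) ≤ 2 * j * (k * ℓ) ∨
      2 * j * (k * ℓ) + 2 * (k * ℓ) ≤ 2 * i * (k * ℓ) := by
    rcases Nat.lt_or_ge i j with h | h
    · left
      calc 2 * i * (k * ℓ) + 2 * (k * ℓ) = (2 * i + 2) * (k * ℓ) := by ring
        _ ≤ (2 * j) * (k * ℓ) := mul_le_mul_left (by omega) _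
    · have h' : j < i := lt_of_le_of_ne h hij
      right
      calc 2 * j * (k * ℓ) + 2 * (k * ℓ) = (2 * j + 2) * (k * ℓ) := by ring
        _ ≤ (2 * i) * (k * ℓ) := mul_le_mul_left (by omega) _
  have hjout : ∀ y : ℕ, 2 * i * (k * ℓ) ≤ y → y < 2 * i * (k * ℓ) + 2 * (k * ℓ) →
      Hhyp n k ℓ j y = 1 / (2 * (n : ℝ) * k * ℓ) := by
    intro y h1 h2
    apply Hhyp_out
    rcases hsep with h | h
    · left; linarith
    · right; linarith
  -- the two relevant finsets
  set U : Finset ℕ := Finset.Ico (2 * i * (k * ℓ)) (2 * i * (k * ℓ) + 2 * (k * ℓ)) ∪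
      Finset.Ico (2 * j * (k * ℓ)) (2 * j * (k * ℓ) + 2 * (k * ℓ)) with hU
  set AB : Finset ℕ := Finset.univ.image a ∪ Finset.univ.image b with hAB
  have hUmem : ∀ x : ℕ, x ∈ U ↔
      (2 * i * (k * ℓ) ≤ x ∧ x < 2 * i * (k * ℓ) + 2 * (k * ℓ)) ∨
      (2 * j * (k * ℓ) ≤ x ∧ x < 2 * j * (k * ℓ) + 2 * (k * ℓ)) := by
    intro x; simp [hU, Finset.mem_union, Finset.mem_Ico]
  have hABmem : ∀ x : ℕ, x ∈ AB ↔ (∃ v, a v = x) ∨ (∃ v, b v = x) := by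
    intro x; simp [hAB, Finset.mem_union, Finset.mem_image]
  -- pointwise value of |P - H_j|
  have keyj : ∀ x : ℕ,
      |Pdist n k ℓ i a b x - Hhyp n k ℓ j x|
        = (1 / ((ℓ : ℝ) - 1)) / (2 * (n : ℝ) * k * ℓ) * (if x ∈ U then 1 else 0)
          + (1 - 1 / ((ℓ : ℝ) - 1)) / (2 * (n : ℝ) * k * ℓ) * (if x ∈ AB then 1 else 0) := by
    intro x
    by_cases hxa : ∃ v : Fin k, a v = x
    · obtain ⟨v, hv⟩ := hxa
      have hbd := haB v; rw [hv] at hbd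
      have hx2 : x < 2 * i * (k * ℓ) + 2 * (k * ℓ) := by
        linarith [hbd.2, Nat.zero_le (k * ℓ)]
      have hxU : x ∈ U := (hUmem x).mpr (Or.inl ⟨hbd.1, hx2⟩)
      have hxAB : x ∈ AB := (hABmem x).mpr (Or.inl ⟨v, hv⟩)
      simp only [Pdist]
      rw [if_pos ⟨v, hv⟩, hjout x hbd.1 hx2, if_pos hxU, if_pos hxAB, zero_sub, abs_neg,
        abs_of_nonneg (div_nonneg zero_le_one hD0.le), mul_one, mul_one, ← add_div]
      ring_nf
    · by_cases hxb : ∃ v : Fin k, b v = x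
      · obtain ⟨v, hv⟩ := hxb
        have hbd := hbB v; rw [hv] at hbd
        have hx1 : 2 * i * (k * ℓ) ≤ x := by linarith [hbd.1, Nat.zero_le (k * ℓ)]
        have hxU : x ∈ U := (hUmem x).mpr (Or.inl ⟨hx1, hbd.2⟩)
        have hxAB : x ∈ AB := (hABmem x).mpr (Or.inr ⟨v, hv⟩)
        simp only [Pdist]
        rw [if_neg hxa, if_pos ⟨v, hv⟩, hjout x hx1 hbd.2, if_pos hxU, if_pos hxAB,
          div_sub_div_same, mul_one, mul_one, ← add_div,
          abs_of_nonneg (div_nonneg (by norm_num) hD0.le)]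
        ring_nf
      · have hxAB : x ∉ AB := fun h => ((hABmem x).mp h).elim hxa hxb
        simp only [Pdist]
        rw [if_neg hxa, if_neg hxb, if_neg hxAB, mul_zero, add_zero,
          Hdiff n k ℓ i j hℓ hij x]
        congr 1
        exact if_congr (hUmem x).symm rfl rfl
  -- pointwise value of |P - H_i|
  have keyi : ∀ x : ℕ,
      |Pdist n k ℓ i a b x - Hhyp n k ℓ i x|
        = (1 + 1 / ((ℓ : ℝ) - 1)) / (2 * (n : ℝ) * k * ℓ) * (if x ∈ AB then 1 else 0) := by
    intro x
    by_cases hxa : ∃ v : Fin k, a v = x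
    · obtain ⟨v, hv⟩ := hxa
      have hbd := haB v; rw [hv] at hbd
      have hxAB : x ∈ AB := (hABmem x).mpr (Or.inl ⟨v, hv⟩)
      simp only [Pdist]
      rw [if_pos ⟨v, hv⟩, Hhyp_in1 n k ℓ i x hbd.1 hbd.2, if_pos hxAB, mul_one, zero_sub,
        abs_neg, abs_of_nonneg (div_nonneg (by linarith) hD0.le)]
    · by_cases hxb : ∃ v : Fin k, b v = x
      · obtain ⟨v, hv⟩ := hxb
        have hbd := hbB v; rw [hv] at hbd
        have hxAB : x ∈ AB := (hABmem x).mpr (Or.inr ⟨v, hv⟩)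
        simp only [Pdist]
        rw [if_neg hxa, if_pos ⟨v, hv⟩, Hhyp_in2 n k ℓ i x hbd.1 hbd.2, if_pos hxAB, mul_one,
          div_sub_div_same,
          show (2 : ℝ) - (1 - 1 / ((ℓ : ℝ) - 1)) = 1 + 1 / ((ℓ : ℝ) - 1) by ring]
        exact abs_of_nonneg (div_nonneg (by linarith) hD0.le)
      · have hxAB : x ∉ AB := fun h => ((hABmem x).mp h).elim hxa hxb
        simp only [Pdist]
        rw [if_neg hxa, if_neg hxb, if_neg hxAB, mul_zero, sub_self, abs_zero]
  -- cardinalities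
  have hblocki : 2 * i * (k * ℓ) + 2 * (k * ℓ) ≤ 2 * n * k * ℓ := by
    calc 2 * i * (k * ℓ) + 2 * (k * ℓ) = (2 * i + 2) * (k * ℓ) := by ring
      _ ≤ (2 * n) * (k * ℓ) := mul_le_mul_left (by omega) _
      _ = 2 * n * k * ℓ := by ring
  have hblockj : 2 * j * (k * ℓ) + 2 * (k * ℓ) ≤ 2 * n * k * ℓ := by
    calc 2 * j * (k * ℓ) + 2 * (k * ℓ) = (2 * j + 2) * (k * ℓ) := by ring
      _ ≤ (2 * n) * (k * ℓ) := mul_le_mul_left (by omega) _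
      _ = 2 * n * k * ℓ := by ring
  have hUS : U ⊆ Finset.range (2 * n * k * ℓ) := by
    intro x hx
    rw [Finset.mem_range]
    rcases (hUmem x).mp hx with h | h
    · linarith [h.2]
    · linarith [h.2]
  have hABS : AB ⊆ Finset.range (2 * n * k * ℓ) := by
    intro x hx
    rw [Finset.mem_range]
    rcases (hABmem x).mp hx with ⟨v, hv⟩ | ⟨v, hv⟩
    · have h := haB v; rw [hv] at h; linarith [h.2, Nat.zero_le (k * ℓ)]
    · have h := hbB v; rw [hv] at h; linarith [h.2]
  have hUcard : U.card = 4 * (k * ℓ) := by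
    have hdisj : Disjoint (Finset.Ico (2 * i * (k * ℓ)) (2 * i * (k * ℓ) + 2 * (k * ℓ)))
        (Finset.Ico (2 * j * (k * ℓ)) (2 * j * (k * ℓ) + 2 * (k * ℓ))) := by
      rw [Finset.disjoint_left]
      intro x hx1 hx2
      rw [Finset.mem_Ico] at hx1 hx2
      rcases hsep with h | h
      · linarith [hx1.2, hx2.1]
      · linarith [hx2.2, hx1.1]
    rw [hU, Finset.card_union_of_disjoint hdisj, Nat.card_Ico, Nat.card_Ico,
      Nat.add_sub_cancel_left, Nat.add_sub_cancel_left]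
    ring
  have hstep : ∀ (u : ℕ) (f : Fin k → ℕ), (∀ v : Fin k, f v ∈ Tblk k ℓ u v) →
      ∀ v w : Fin k, (v : ℕ) < (w : ℕ) → f v < f w := by
    intro u f hf v w hvw
    have h1 := hf v; have h2 := hf w
    simp only [Tblk, Finset.mem_Ico] at h1 h2
    have h3 : ((v : ℕ) + 1) * ℓ ≤ (w : ℕ) * ℓ := mul_le_mul_left (by omega) ℓ
    linarith [h1.2, h2.1]
  have hinj : ∀ (u : ℕ) (f : Fin k → ℕ), (∀ v : Fin k, f v ∈ Tblk k ℓ u v) →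
      Function.Injective f := by
    intro u f hf v w hvw
    rcases lt_trichotomy (v : ℕ) (w : ℕ) with h | h | h
    · exact absurd hvw (ne_of_lt (hstep u f hf v w h))
    · exact Fin.ext h
    · exact absurd hvw.symm (ne_of_lt (hstep u f hf w v h))
  have hABcard : AB.card = 2 * k := by
    have habdisj : Disjoint (Finset.univ.image a) (Finset.univ.image b) := by
      rw [Finset.disjoint_left]
      intro x hx1 hx2
      rw [Finset.mem_image] at hx1 hx2
      obtain ⟨v, _, hv⟩ := hx1
      obtain ⟨w, _, hw⟩ := hx2
      have h1 := haB v; rw [hv] at h1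
      have h2 := hbB w; rw [hw] at h2
      linarith [h1.2, h2.1]
    rw [hAB, Finset.card_union_of_disjoint habdisj,
      Finset.card_image_of_injective _ (hinj _ a ha),
      Finset.card_image_of_injective _ (hinj _ b hb),
      Finset.card_univ, Fintype.card_fin]
    ring
  -- summing indicators
  have hsum : ∀ T : Finset ℕ, T ⊆ Finset.range (2 * n * k * ℓ) →
      ∑ x ∈ Finset.range (2 * n * k * ℓ), (if x ∈ T then (1 : ℝ) else 0) = T.card := by
    intro T hT
    rw [Finset.sum_ite_mem, Finset.inter_eq_right.mpr hT, Finset.sum_const, nsmul_eq_mul,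
      mul_one]
  have sumj : ∑ x ∈ Finset.range (2 * n * k * ℓ), |Pdist n k ℓ i a b x - Hhyp n k ℓ j x|
      = (1 / ((ℓ : ℝ) - 1)) / (2 * (n : ℝ) * k * ℓ) * ((4 * (k * ℓ) : ℕ) : ℝ)
        + (1 - 1 / ((ℓ : ℝ) - 1)) / (2 * (n : ℝ) * k * ℓ) * ((2 * k : ℕ) : ℝ) := by
    rw [Finset.sum_congr rfl (fun x _ => keyj x), Finset.sum_add_distrib,
      ← Finset.mul_sum, ← Finset.mul_sum, hsum U hUS, hsum AB hABS, hUcard, hABcard]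
  have sumi : ∑ x ∈ Finset.range (2 * n * k * ℓ), |Pdist n k ℓ i a b x - Hhyp n k ℓ i x|
      = (1 + 1 / ((ℓ : ℝ) - 1)) / (2 * (n : ℝ) * k * ℓ) * ((2 * k : ℕ) : ℝ) := by
    rw [Finset.sum_congr rfl (fun x _ => keyi x), ← Finset.mul_sum, hsum AB hABS, hABcard]
  have part1 : (1 / 2 : ℝ) * ∑ x ∈ Finset.range (2 * n * k * ℓ),
      |Pdist n k ℓ i a b x - Hhyp n k ℓ j x|
      = (k : ℝ) * (3 + 1 / ((ℓ : ℝ) - 1)) / (2 * (n : ℝ) * k * ℓ) := by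
    rw [sumj]
    push_cast
    field_simp
    ring
  have part1' : (1 / 2 : ℝ) * ∑ x ∈ Finset.range (2 * n * k * ℓ),
      |Pdist n k ℓ i a b x - Hhyp n k ℓ i x|
      = (k : ℝ) * (1 + 1 / ((ℓ : ℝ) - 1)) / (2 * (n : ℝ) * k * ℓ) := by
    rw [sumi]
    push_cast
    field_simp
  have h1β : (0 : ℝ) < 1 + 1 / ((ℓ : ℝ) - 1) := by linarith
  refine ⟨part1, ?_, ?_⟩
  · rw [part1, part1', div_div_div_comm, div_self (ne_of_gt hD0), div_one,
      mul_div_mul_left _ _ hkne]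
  · rw [le_div_iff₀ h1β]
    nlinarith [sq_nonneg (1 / ((ℓ : ℝ) - 1))]
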